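/- The group K_3 has exactly thirteen subgroups of index 3: Nat.card {H : Subgroup K_3 // H.index = 3} = 13. -/

import Mathlib

def braidRels (n : ℕ) : Set (FreeGroup (Fin (n - 1))) :=
  {r | (∃ i j : Fin (n - 1), 2 ≤ |(i : ℤ) - (j : ℤ)| ∧
        r = FreeGroup.of i * FreeGroup.of j * (FreeGroup.of i)⁻¹ * (FreeGroup.of j)⁻¹) ∨
       (∃ i j : Fin (n - 1), |(i : ℤ) - (j : ℤ)| = 1 ∧
        r = FreeGroup.of i * FreeGroup.of j * FreeGroup.of i *
            (FreeGroup.of j)⁻¹ * (FreeGroup.of i)⁻¹ * (FreeGroup.of j)⁻¹)}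

/-- The braid group `B n` on `n` strands, presented with generators `σ_1, …, σ_{n-1}`. -/
abbrev BraidGroup (n : ℕ) : Type := PresentedGroup (braidRels n)

/-- The generator `σ_{i+1}` of the braid group. -/
def braidGen {n : ℕ} (i : Fin (n - 1)) : BraidGroup n := PresentedGroup.of i

open SemidirectProduct Multiplicative

abbrev F2 := FreeGroup Bool

def Agen : F2 := FreeGroup.of false
def Bgen : F2 := FreeGroup.of true

def alphaHom : F2 →* F2 := FreeGroup.lift (fun b => if b then Agen⁻¹ * Bgen else Bgen)
def betaHom : F2 →* F2 := FreeGroup.lift (fun b => if b then Agen else Agen * Bgen⁻¹)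

lemma beta_alpha : betaHom.comp alphaHom = MonoidHom.id F2 := by
  ext b
  cases b <;> simp [alphaHom, betaHom, Agen, Bgen]

lemma alpha_beta : alphaHom.comp betaHom = MonoidHom.id F2 := by
  ext b
  cases b <;> simp [alphaHom, betaHom, Agen, Bgen]

def alphaAut : F2 ≃* F2 := MonoidHom.toMulEquiv alphaHom betaHom beta_alpha alpha_beta

@[simp] lemma alphaAut_A : alphaAut Agen = Bgen := by
  simp [alphaAut, alphaHom, Agen, Bgen]

@[simp] lemma alphaAut_B : alphaAut Bgen = Agen⁻¹ * Bgen := by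
  simp [alphaAut, alphaHom, Agen, Bgen]

def phi : Multiplicative ℤ →* MulAut F2 := zpowersHom _ alphaAut

abbrev GSD := SemidirectProduct F2 (Multiplicative ℤ) phi

@[simp] lemma phi_one : phi (ofAdd 1) = alphaAut := by
  simp [phi]

-- generators
abbrev g0 : BraidGroup 3 := braidGen (0 : Fin (3-1))
abbrev g1 : BraidGroup 3 := braidGen (1 : Fin (3-1))

lemma braid_rel : g0 * g1 * g0 = g1 * g0 * g1 := by
  have hmem : (FreeGroup.of (0 : Fin (3-1)) * FreeGroup.of (1 : Fin (3-1)) * FreeGroup.of 0 *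
      (FreeGroup.of 1)⁻¹ * (FreeGroup.of 0)⁻¹ * (FreeGroup.of 1)⁻¹) ∈ braidRels 3 := by
    right
    exact ⟨0, 1, by decide, rfl⟩
  have h1 : PresentedGroup.mk (braidRels 3) (FreeGroup.of 0 * FreeGroup.of 1 * FreeGroup.of 0 *
      (FreeGroup.of 1)⁻¹ * (FreeGroup.of 0)⁻¹ * (FreeGroup.of 1)⁻¹) = 1 := by
    apply (QuotientGroup.eq_one_iff _).mpr
    exact Subgroup.subset_normalClosure hmem
  have h2 : g0 * g1 * g0 * g1⁻¹ * g0⁻¹ * g1⁻¹ = 1 := by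
    simpa [braidGen, PresentedGroup.of, map_mul, map_inv] using h1
  rw [← one_mul (g1 * g0 * g1), ← h2]
  group

def fb : Fin (3-1) → GSD := fun i => if i = 0 then inr (ofAdd 1) else inl Agen * inr (ofAdd 1)

lemma uvu : (inr (ofAdd 1) : GSD) * (inl Agen * inr (ofAdd 1)) * inr (ofAdd 1)
    = (inl Agen * inr (ofAdd 1)) * inr (ofAdd 1) * (inl Agen * inr (ofAdd 1)) := by
  ext
  · simp
  · simp

lemma rel_helper {G : Type*} [Group G] (u v : G) (h : u*v*u = v*u*v) :
    u*v*u*v⁻¹*u⁻¹*v⁻¹ = 1 := by rw [h]; group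

lemma lift_fb_rels : ∀ r ∈ braidRels 3, FreeGroup.lift fb r = 1 := by
  rintro r (⟨i, j, hij, rfl⟩ | ⟨i, j, hij, rfl⟩)
  · exfalso
    fin_cases i <;> fin_cases j <;> revert hij <;> decide
  · fin_cases i <;> fin_cases j
    · exfalso; revert hij; decide
    · simp only [map_mul, map_inv, FreeGroup.lift_apply_of]
      exact rel_helper _ _ uvu
    · simp only [map_mul, map_inv, FreeGroup.lift_apply_of]
      exact rel_helper _ _ uvu.symm
    · exfalso; revert hij; decide

def toG : BraidGroup 3 →* GSD := PresentedGroup.toGroup lift_fb_rels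

def f1 : F2 →* BraidGroup 3 :=
  FreeGroup.lift (fun b => if b then g0 * g1 * g0⁻¹ * g0⁻¹ else g1 * g0⁻¹)

@[simp] lemma f1_A : f1 Agen = g1 * g0⁻¹ := by simp [f1, Agen]
@[simp] lemma f1_B : f1 Bgen = g0 * g1 * g0⁻¹ * g0⁻¹ := by simp [f1, Bgen]

lemma conj_rel : g1⁻¹ * g0 * g1 = g0 * g1 * g0⁻¹ := by
  have h : g1 * (g1⁻¹ * g0 * g1) = g1 * (g0 * g1 * g0⁻¹) := by
    have := braid_rel
    group
    rw [show g1 * g0 * g1 = g0 * g1 * g0 from braid_rel.symm]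
    group
  exact mul_left_cancel h

lemma key1 : ∀ x : F2, f1 (alphaAut x) = g0 * f1 x * g0⁻¹ := by
  have h : f1.comp alphaAut.toMonoidHom = ((MulAut.conj g0).toMonoidHom).comp f1 := by
    ext b
    cases b
    · show f1 (alphaAut Agen) = (MulAut.conj g0) (f1 Agen)
      rw [alphaAut_A, f1_A, f1_B, MulAut.conj_apply]
      group
    · show f1 (alphaAut Bgen) = (MulAut.conj g0) (f1 Bgen)
      rw [alphaAut_B, MulAut.conj_apply, map_mul, map_inv, f1_A, f1_B]
      rw [show (g1 * g0⁻¹)⁻¹ * (g0 * g1 * g0⁻¹ * g0⁻¹) = g0 * (g1⁻¹ * g0 * g1) * g0⁻¹ * g0⁻¹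
        from by group, conj_rel]
      group
  intro x
  exact DFunLike.congr_fun h x

lemma key1_inv : ∀ x : F2, f1 (alphaAut⁻¹ x) = g0⁻¹ * f1 x * g0 := by
  intro x
  have := key1 (alphaAut⁻¹ x)
  rw [show alphaAut (alphaAut⁻¹ x) = x from alphaAut.apply_symm_apply x] at this
  rw [this]
  group

lemma keyZ : ∀ (n : ℤ) (x : F2), f1 ((alphaAut ^ n) x) = g0 ^ n * f1 x * (g0 ^ n)⁻¹ := by
  intro n
  induction n using Int.induction_on with
  | zero => intro x; simp
  | succ k ih =>
      intro x
      have h1 : (alphaAut ^ ((k : ℤ) + 1)) x = (alphaAut ^ (k : ℤ)) (alphaAut x) := by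
        rw [zpow_add, zpow_one, MulAut.mul_apply]
      rw [h1, ih, key1]
      rw [zpow_add, zpow_one]
      group
  | pred k ih =>
      intro x
      have h1 : (alphaAut ^ (-(k : ℤ) - 1)) x = (alphaAut ^ (-(k : ℤ))) (alphaAut⁻¹ x) := by
        rw [sub_eq_add_neg, zpow_add, zpow_neg_one, MulAut.mul_apply]
      rw [h1, ih, key1_inv]
      rw [sub_eq_add_neg, zpow_add, zpow_neg_one]
      group

def f2 : Multiplicative ℤ →* BraidGroup 3 := zpowersHom _ g0

lemma hcomp : ∀ z : Multiplicative ℤ,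
    f1.comp (phi z).toMonoidHom = (MulAut.conj (f2 z)).toMonoidHom.comp f1 := by
  intro z
  refine MonoidHom.ext fun x => ?_
  simp only [MonoidHom.comp_apply, MulEquiv.coe_toMonoidHom, MulAut.conj_apply]
  have hphi : phi z = alphaAut ^ (toAdd z) := by simp [phi]
  have hf2 : f2 z = g0 ^ (toAdd z) := by simp [f2]
  rw [hphi, hf2, keyZ]

def fromG : GSD →* BraidGroup 3 := SemidirectProduct.lift f1 f2 hcomp

@[simp] lemma fromG_inl (x : F2) : fromG (inl x) = f1 x := SemidirectProduct.lift_inl f1 f2 hcomp x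
@[simp] lemma fromG_inr (z : Multiplicative ℤ) : fromG (inr z) = f2 z := SemidirectProduct.lift_inr f1 f2 hcomp z

lemma fromG_toG : fromG.comp toG = MonoidHom.id (BraidGroup 3) := by
  apply PresentedGroup.ext
  intro i
  fin_cases i
  · show fromG (toG (braidGen 0)) = braidGen 0
    rw [show toG (braidGen 0) = fb 0 from PresentedGroup.toGroup.of lift_fb_rels]
    show fromG (inr (ofAdd 1)) = g0
    rw [fromG_inr]
    simp [f2]
  · show fromG (toG (braidGen 1)) = braidGen 1
    rw [show toG (braidGen 1) = fb 1 from PresentedGroup.toGroup.of lift_fb_rels]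
    show fromG (inl Agen * inr (ofAdd 1)) = g1
    rw [map_mul, fromG_inr, fromG_inl]
    rw [f1_A]
    simp [f2]

lemma toG_fromG : toG.comp fromG = MonoidHom.id GSD := by
  apply SemidirectProduct.hom_ext
  · refine FreeGroup.ext_hom _ _ fun b => ?_
    cases b
    · show toG (fromG (inl Agen)) = inl Agen
      rw [fromG_inl, f1_A, map_mul, map_inv]
      rw [show toG g1 = fb 1 from PresentedGroup.toGroup.of lift_fb_rels,
          show toG g0 = fb 0 from PresentedGroup.toGroup.of lift_fb_rels]
      show inl Agen * inr (ofAdd 1) * (inr (ofAdd 1))⁻¹ = inl Agen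
      group
    · show toG (fromG (inl Bgen)) = inl Bgen
      rw [fromG_inl, f1_B, map_mul, map_mul, map_mul, map_inv]
      rw [show toG g1 = fb 1 from PresentedGroup.toGroup.of lift_fb_rels,
          show toG g0 = fb 0 from PresentedGroup.toGroup.of lift_fb_rels]
      show inr (ofAdd 1) * (inl Agen * inr (ofAdd 1)) * (inr (ofAdd 1))⁻¹ *
        (inr (ofAdd 1))⁻¹ = inl Bgen
      rw [show (inr (ofAdd 1) : GSD) * (inl Agen * inr (ofAdd 1)) * (inr (ofAdd 1))⁻¹ *
        (inr (ofAdd 1))⁻¹ = inr (ofAdd 1) * inl Agen * (inr (ofAdd 1))⁻¹ from by group]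
      rw [← map_inv, ← SemidirectProduct.inl_aut]
      simp
  · apply MonoidHom.ext_mint
    show toG (fromG (inr (ofAdd 1))) = inr (ofAdd 1)
    rw [fromG_inr]
    simp only [f2, zpowersHom_apply, toAdd_ofAdd, zpow_one]
    exact PresentedGroup.toGroup.of lift_fb_rels

noncomputable def isoB3 : BraidGroup 3 ≃* GSD :=
  MonoidHom.toMulEquiv toG fromG fromG_toG toG_fromG

open scoped commutatorElement in
lemma comm_GSD : commutator GSD = (inl : F2 →* GSD).range := by
  apply le_antisymm
  · rw [commutator_def, Subgroup.commutator_le]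
    intro g _ h _
    rw [range_inl_eq_ker_rightHom, MonoidHom.mem_ker, map_commutatorElement]
    exact commutatorElement_eq_one_iff_commute.mpr (mul_comm _ _)
  · rintro x ⟨y, rfl⟩
    have hA : (inl Agen : GSD) ∈ commutator GSD := by
      have hc : ⁅(inr (ofAdd 1) : GSD), inl Bgen⁆ ∈ commutator GSD := by
        rw [commutator_def]
        exact Subgroup.commutator_mem_commutator (Subgroup.mem_top _) (Subgroup.mem_top _)
      have he : ⁅(inr (ofAdd 1) : GSD), inl Bgen⁆ = (inl Agen⁻¹ : GSD) := by
        rw [commutatorElement_def]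
        rw [show (inr (ofAdd 1) : GSD) * inl Bgen * (inr (ofAdd 1))⁻¹
            = inr (ofAdd 1) * inl Bgen * inr (ofAdd 1)⁻¹ from by rw [map_inv]]
        rw [← SemidirectProduct.inl_aut, phi_one, alphaAut_B, ← map_inv, ← map_mul]
        congr 1
        group
      rw [he] at hc
      simpa using (commutator GSD).inv_mem hc
    have hBA : (inl (Bgen * Agen⁻¹) : GSD) ∈ commutator GSD := by
      have hc : ⁅(inr (ofAdd 1) : GSD), inl Agen⁆ ∈ commutator GSD := by
        rw [commutator_def]
        exact Subgroup.commutator_mem_commutator (Subgroup.mem_top _) (Subgroup.mem_top _)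
      have he : ⁅(inr (ofAdd 1) : GSD), inl Agen⁆ = (inl (Bgen * Agen⁻¹) : GSD) := by
        rw [commutatorElement_def]
        rw [show (inr (ofAdd 1) : GSD) * inl Agen * (inr (ofAdd 1))⁻¹
            = inr (ofAdd 1) * inl Agen * inr (ofAdd 1)⁻¹ from by rw [map_inv]]
        rw [← SemidirectProduct.inl_aut, phi_one, alphaAut_A, ← map_inv, ← map_mul]
      rw [← he]
      exact hc
    have hB : (inl Bgen : GSD) ∈ commutator GSD := by
      have := (commutator GSD).mul_mem hBA hA
      rw [← map_mul] at this
      rw [show Bgen * Agen⁻¹ * Agen = Bgen from by group] at this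
      exact this
    induction y using FreeGroup.induction_on with
    | C1 => simpa using (commutator GSD).one_mem
    | of b =>
        cases b with
        | false => exact hA
        | true => exact hB
    | inv_of b hb => rw [map_inv]; exact (commutator GSD).inv_mem hb
    | mul u v hu hv => rw [map_mul]; exact (commutator GSD).mul_mem hu hv

noncomputable def commB3Equiv : ↥(commutator (BraidGroup 3)) ≃* F2 := by
  have h1 : (commutator (BraidGroup 3)).map isoB3.toMonoidHom = commutator GSD := by
    rw [commutator_def, commutator_def, Subgroup.map_commutator]
    rw [Subgroup.map_top_of_surjective isoB3.toMonoidHom (fun y => ⟨isoB3.symm y, by simp⟩)]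
  exact (((isoB3.subgroupMap (commutator (BraidGroup 3))).trans
      (MulEquiv.subgroupCongr h1)).trans
      (MulEquiv.subgroupCongr comm_GSD)).trans
      (MulEquiv.symm (MonoidHom.ofInjective SemidirectProduct.inl_injective))

open Equiv in
abbrev S3 := Equiv.Perm (Fin 3)

/-- The subgroup of `G` attached to `f : G →* S3`: preimage of the stabilizer of `0`. -/
def Hsub (f : F2 →* S3) : Subgroup F2 :=
  (MulAction.stabilizer S3 (0 : Fin 3)).comap f

lemma mem_Hsub {f : F2 →* S3} {g : F2} : g ∈ Hsub f ↔ f g 0 = 0 := by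
  simp [Hsub, MulAction.mem_stabilizer_iff, Equiv.Perm.smul_def]

def TransF (f : F2 →* S3) : Prop := ∀ x : Fin 3, ∃ g : F2, f g 0 = x

lemma index_Hsub (f : F2 →* S3) (hf : TransF f) : (Hsub f).index = 3 := by
  have key : ∀ g h : F2, f g 0 = f h 0 ↔ (g⁻¹ * h ∈ Hsub f) := by
    intro g h
    rw [mem_Hsub, map_mul, map_inv]
    constructor
    · intro H; simp [Equiv.Perm.mul_apply, ← H]
    · intro H
      have := congrArg (f g) H
      simpa [Equiv.Perm.mul_apply] using this.symm
  let e : F2 ⧸ Hsub f → Fin 3 := fun q =>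
    Quotient.liftOn' q (fun g => f g 0) (by
      intro g h hr
      rw [QuotientGroup.leftRel_apply] at hr
      exact (key g h).mpr hr)
  have hbij : Function.Bijective e := by
    constructor
    · intro x y
      induction x using Quotient.inductionOn'
      induction y using Quotient.inductionOn'
      intro hxy
      refine Quotient.sound' ?_
      rw [QuotientGroup.leftRel_apply]
      exact (key _ _).mp hxy
    · intro x
      obtain ⟨g, hg⟩ := hf x
      exact ⟨Quotient.mk'' g, hg⟩
  rw [Subgroup.index]
  rw [Nat.card_congr (Equiv.ofBijective e hbij)]
  simp

lemma exists_transF (H : Subgroup F2) (hH : H.index = 3) :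
    ∃ f : F2 →* S3, TransF f ∧ Hsub f = H := by
  classical
  have hcard : Nat.card (F2 ⧸ H) = 3 := hH
  have h0 : Nat.card (F2 ⧸ H) ≠ 0 := by omega
  let e0 : (F2 ⧸ H) ≃ Fin (Nat.card (F2 ⧸ H)) := Nat.equivFinOfCardPos h0
  let e1 : (F2 ⧸ H) ≃ Fin 3 := e0.trans (finCongr hcard)
  let e : (F2 ⧸ H) ≃ Fin 3 := e1.trans (Equiv.swap (e1 ((1 : F2) : F2 ⧸ H)) 0)
  have he1 : e ((1 : F2) : F2 ⧸ H) = 0 := Equiv.swap_apply_left _ _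
  -- permCongr as a group hom
  let pc : Equiv.Perm (F2 ⧸ H) →* S3 :=
    { toFun := fun p => e.permCongr p
      map_one' := by ext x; simp
      map_mul' := by intro p q; ext x; simp [Equiv.permCongr] }
  let f : F2 →* S3 := pc.comp (MulAction.toPermHom F2 (F2 ⧸ H))
  have hf : ∀ (g : F2) (x : F2 ⧸ H), f g (e x) = e (g • x) := by
    intro g x
    simp [f, pc, Equiv.permCongr]
  have hf1 : ∀ g : F2, f g 0 = e ((g : F2 ⧸ H)) := by
    intro g
    have := hf g ((1 : F2) : F2 ⧸ H)
    rw [he1] at this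
    rw [this]
    congr 1
    simp
  refine ⟨f, ?_, ?_⟩
  · intro x
    obtain ⟨y, hy⟩ := e.surjective x
    obtain ⟨g, hg⟩ := QuotientGroup.mk_surjective y
    exact ⟨g, by rw [hf1, hg, hy]⟩
  · ext g
    rw [mem_Hsub, hf1, ← he1, e.apply_eq_iff_eq]
    rw [show ((1:F2) : F2 ⧸ H) = ((1:F2) : F2 ⧸ H) from rfl]
    rw [QuotientGroup.eq]
    simp

/-- The stabilizer-preserving permutations. -/
abbrev Pi0 := {π : S3 // π 0 = 0}

lemma inv_zero_of_pi0 {π : S3} (h : π 0 = 0) : π⁻¹ 0 = 0 := by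
  conv_lhs => rw [← h]
  exact Equiv.symm_apply_apply π 0

noncomputable def fiberEquiv (f₀ : F2 →* S3) (hf₀ : TransF f₀) :
    Pi0 ≃ {f : F2 →* S3 // TransF f ∧ Hsub f = Hsub f₀} := by
  classical
  have key : ∀ (π : S3), π 0 = 0 → ∀ g : F2,
      ((MulAut.conj π).toMonoidHom.comp f₀) g 0 = π (f₀ g 0) := by
    intro π hπ g
    simp only [MonoidHom.comp_apply, MulEquiv.coe_toMonoidHom, MulAut.conj_apply,
      Equiv.Perm.mul_apply, inv_zero_of_pi0 hπ]
  refine Equiv.ofBijective (fun π =>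
    ⟨(MulAut.conj π.1).toMonoidHom.comp f₀, ?_, ?_⟩) ⟨?_, ?_⟩
  · intro x
    obtain ⟨g, hg⟩ := hf₀ (π.1.symm x)
    exact ⟨g, by rw [key π.1 π.2 g, hg, Equiv.apply_symm_apply]⟩
  · ext g
    rw [mem_Hsub, mem_Hsub, key π.1 π.2 g]
    constructor
    · intro h
      have := congrArg π.1.symm h
      rw [Equiv.symm_apply_apply] at this
      rw [this, Equiv.symm_apply_eq]
      exact π.2.symm
    · intro h; rw [h, π.2]
  · -- injective
    intro π ρ hpr
    have h : ∀ g : F2, ((MulAut.conj π.1).toMonoidHom.comp f₀) g 0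
        = ((MulAut.conj ρ.1).toMonoidHom.comp f₀) g 0 := by
      intro g
      rw [show ((MulAut.conj π.1).toMonoidHom.comp f₀ : F2 →* S3)
        = (MulAut.conj ρ.1).toMonoidHom.comp f₀ from congrArg Subtype.val hpr]
    refine Subtype.ext (Equiv.ext fun x => ?_)
    obtain ⟨g, hg⟩ := hf₀ x
    have := h g
    rw [key π.1 π.2 g, key ρ.1 ρ.2 g, hg] at this
    exact this
  · -- surjective
    rintro ⟨f, hf, hHf⟩
    have W : ∀ g h : F2, f₀ g 0 = f₀ h 0 ↔ f g 0 = f h 0 := by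
      intro g h
      have m : ∀ (u : F2 →* S3) (g h : F2), u g 0 = u h 0 ↔ g⁻¹ * h ∈ Hsub u := by
        intro u g h
        rw [mem_Hsub, map_mul, map_inv]
        constructor
        · intro H; simp [Equiv.Perm.mul_apply, ← H]
        · intro H
          have := congrArg (u g) H
          simpa [Equiv.Perm.mul_apply] using this.symm
      rw [m f₀, m f, hHf]
    -- build the permutation
    let p : Fin 3 → Fin 3 := fun x => f (Classical.choose (hf₀ x)) 0
    have hp : ∀ g : F2, p (f₀ g 0) = f g 0 := by
      intro g
      have hc : f₀ (Classical.choose (hf₀ (f₀ g 0))) 0 = f₀ g 0 :=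
        Classical.choose_spec (hf₀ (f₀ g 0))
      exact (W _ _).mp hc
    have hpinj : Function.Injective p := by
      intro x y hxy
      obtain ⟨g, hg⟩ := hf₀ x
      obtain ⟨h, hh⟩ := hf₀ y
      rw [← hg, ← hh] at hxy ⊢
      rw [hp, hp] at hxy
      exact (W g h).mpr hxy
    have hpbij : Function.Bijective p := Finite.injective_iff_bijective.mp hpinj
    let π : S3 := Equiv.ofBijective p hpbij
    have hπ0 : π 0 = 0 := by
      have h1 : f₀ (1 : F2) 0 = 0 := by simp
      have : π (f₀ (1:F2) 0) = f (1:F2) 0 := hp 1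
      rw [h1] at this
      simpa using this
    refine ⟨⟨π, hπ0⟩, Subtype.ext ?_⟩
    refine MonoidHom.ext fun g => ?_
    refine Equiv.ext fun z => ?_
    obtain ⟨h, hh⟩ := hf z
    have hz : π (f₀ h 0) = z := by show p _ = z; rw [hp]; exact hh
    simp only [MonoidHom.comp_apply, MulEquiv.coe_toMonoidHom, MulAut.conj_apply,
      Equiv.Perm.mul_apply]
    rw [show (π⁻¹ : S3) z = f₀ h 0 from by rw [← hz, Equiv.Perm.inv_def, Equiv.symm_apply_apply]]
    have : f₀ g (f₀ h 0) = f₀ (g * h) 0 := by simp [Equiv.Perm.mul_apply]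
    rw [this, show π (f₀ (g*h) 0) = f (g*h) 0 from by show p _ = _; exact hp _, ← hh]
    simp [Equiv.Perm.mul_apply]

/-- Decidable transitivity condition on a pair of permutations. -/
def TransPair (s t : S3) : Prop :=
  ∀ Sf : Finset (Fin 3), 0 ∈ Sf → (∀ x ∈ Sf, s x ∈ Sf) → (∀ x ∈ Sf, t x ∈ Sf) →
    Sf = Finset.univ

instance : DecidablePred (fun p : S3 × S3 => TransPair p.1 p.2) := by
  unfold TransPair; infer_instance

lemma inv_closed {σ : S3} {Sf : Finset (Fin 3)} (h : ∀ x ∈ Sf, σ x ∈ Sf) :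
    ∀ x ∈ Sf, σ⁻¹ x ∈ Sf := by
  have himg : Sf.image σ = Sf := by
    apply Finset.eq_of_subset_of_card_le
    · intro y hy
      obtain ⟨x, hx, rfl⟩ := Finset.mem_image.mp hy
      exact h x hx
    · rw [Finset.card_image_of_injective _ σ.injective]
  intro x hx
  rw [← himg] at hx
  obtain ⟨y, hy, hyx⟩ := Finset.mem_image.mp hx
  rw [← hyx, Equiv.Perm.inv_def, Equiv.symm_apply_apply]
  exact hy

lemma reach (f : F2 →* S3) (Sf : Finset (Fin 3))
    (hcl : ∀ b : Bool, ∀ x ∈ Sf, f (FreeGroup.of b) x ∈ Sf) :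
    ∀ g : F2, ∀ x ∈ Sf, f g x ∈ Sf := by
  intro g
  induction g using FreeGroup.induction_on with
  | C1 => intro x hx; simpa using hx
  | of b => exact hcl b
  | inv_of b _ =>
      intro x hx
      rw [map_inv]
      exact inv_closed (hcl b) x hx
  | mul u v hu hv =>
      intro x hx
      rw [map_mul]
      exact hu _ (hv _ hx)

lemma transF_iff_transPair (f : F2 →* S3) :
    TransF f ↔ TransPair (f (FreeGroup.of false)) (f (FreeGroup.of true)) := by
  classical
  constructor
  · intro hf Sf h0 hs ht
    apply Finset.eq_univ_iff_forall.mpr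
    intro x
    obtain ⟨g, hg⟩ := hf x
    rw [← hg]
    exact reach f Sf (by intro b; cases b <;> assumption) g 0 h0
  · intro hP x
    let R : Finset (Fin 3) := Finset.univ.filter (fun x => ∃ g : F2, f g 0 = x)
    have h0 : (0 : Fin 3) ∈ R := by
      simp only [R, Finset.mem_filter, Finset.mem_univ, true_and]
      exact ⟨1, by simp⟩
    have hcl : ∀ b : Bool, ∀ y ∈ R, f (FreeGroup.of b) y ∈ R := by
      intro b y hy
      simp only [R, Finset.mem_filter, Finset.mem_univ, true_and] at hy ⊢
      obtain ⟨g, hg⟩ := hy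
      exact ⟨FreeGroup.of b * g, by rw [map_mul, Equiv.Perm.mul_apply, hg]⟩
    have := hP R h0 (hcl false) (hcl true)
    have hx : x ∈ R := this ▸ Finset.mem_univ x
    simpa only [R, Finset.mem_filter, Finset.mem_univ, true_and] using hx

/-- Homs from the free group on two generators correspond to pairs. -/
def homPairEquiv : (F2 →* S3) ≃ S3 × S3 where
  toFun f := (f (FreeGroup.of false), f (FreeGroup.of true))
  invFun p := FreeGroup.lift (fun b => if b then p.2 else p.1)
  left_inv f := by
    ext b
    cases b <;> simp
  right_inv p := by simp

lemma card_transF : Nat.card {f : F2 →* S3 // TransF f} = 26 := by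
  have e : {f : F2 →* S3 // TransF f} ≃ {p : S3 × S3 // TransPair p.1 p.2} := by
    refine Equiv.subtypeEquiv homPairEquiv ?_
    intro f
    rw [transF_iff_transPair]
    rfl
  rw [Nat.card_congr e, Nat.card_eq_fintype_card]
  decide

lemma card_pi0 : Nat.card Pi0 = 2 := by
  rw [Nat.card_eq_fintype_card]
  decide

theorem card_index_three_F2 :
    Nat.card {H : Subgroup F2 // H.index = 3} = 13 := by
  classical
  set I := {H : Subgroup F2 // H.index = 3} with hI
  let Φ : {f : F2 →* S3 // TransF f} → I := fun f => ⟨Hsub f.1, index_Hsub f.1 f.2⟩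
  have e1 : {f : F2 →* S3 // TransF f} ≃ Σ H : I, {f : {f : F2 →* S3 // TransF f} // Φ f = H} :=
    (Equiv.sigmaFiberEquiv Φ).symm
  have e2 : ∀ H : I, {f : {f : F2 →* S3 // TransF f} // Φ f = H} ≃ Pi0 := by
    intro H
    let f₀ := (exists_transF H.1 H.2).choose
    have hf₀ : TransF f₀ := (exists_transF H.1 H.2).choose_spec.1
    have hH : Hsub f₀ = H.1 := (exists_transF H.1 H.2).choose_spec.2
    have e3 : {f : {f : F2 →* S3 // TransF f} // Φ f = H}
        ≃ {f : F2 →* S3 // TransF f ∧ Hsub f = Hsub f₀} := by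
      refine ⟨fun f => ⟨f.1.1, f.1.2, ?_⟩, fun f => ⟨⟨f.1, f.2.1⟩, ?_⟩, ?_, ?_⟩
      · have := congrArg Subtype.val f.2
        simp only [Φ] at this
        rw [this, hH]
      · refine Subtype.ext ?_
        simp only [Φ]
        rw [f.2.2, hH]
      · intro f; rfl
      · intro f; rfl
    exact e3.trans (fiberEquiv f₀ hf₀).symm
  have e4 : {f : F2 →* S3 // TransF f} ≃ I × Pi0 :=
    e1.trans ((Equiv.sigmaCongrRight e2).trans (Equiv.sigmaEquivProd I Pi0))
  have hc := card_transF
  rw [Nat.card_congr e4, Nat.card_prod, card_pi0] at hc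
  omega


lemma card_index3_congr {X Y : Type*} [Group X] [Group Y] (e : X ≃* Y) :
    Nat.card {H : Subgroup X // H.index = 3} = Nat.card {H : Subgroup Y // H.index = 3} := by
  apply Nat.card_congr
  refine ⟨fun H => ⟨H.1.comap e.symm.toMonoidHom, ?_⟩,
          fun H => ⟨H.1.comap e.toMonoidHom, ?_⟩, ?_, ?_⟩
  · rw [Subgroup.index_comap_of_surjective _ e.symm.surjective]; exact H.2
  · rw [Subgroup.index_comap_of_surjective _ e.surjective]; exact H.2
  · intro H
    refine Subtype.ext ?_
    simp only [Subgroup.comap_comap]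
    rw [show e.symm.toMonoidHom.comp e.toMonoidHom = MonoidHom.id X from
      MonoidHom.ext fun x => e.symm_apply_apply x, Subgroup.comap_id]
  · intro H
    refine Subtype.ext ?_
    simp only [Subgroup.comap_comap]
    rw [show e.toMonoidHom.comp e.symm.toMonoidHom = MonoidHom.id Y from
      MonoidHom.ext fun x => e.apply_symm_apply x, Subgroup.comap_id]

/-- The commutator subgroup of the braid group on 3 strands has exactly thirteen subgroups
of index 3. -/
theorem K3_subgroups_index_three :
    Nat.card {H : Subgroup ↥(commutator (BraidGroup 3)) // H.index = 3} = 13 := by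
  rw [card_index3_congr commB3Equiv]
  exact card_index_three_F2
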